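/- Let λ be an infinite regular cardinal and X a linearly ordered set with |X| = λ such that every subset Y ⊆ X of cardinality λ contains an element y with both {z ∈ Y : z < y} and {z ∈ Y : z > y} of cardinality λ. Then for every countable ordinal α, X contains a completely λ-full subset of order type α. -/

import Mathlib

open Cardinal Set

universe u

/-- `Y` is `l`-full on the right in `X`: for every `y ∈ Y`, the union of the
intervals `(y, y')_X` over larger elements `y' ∈ Y` has cardinality `l`. -/
def FullRight {X : Type u} [LinearOrder X] (l : Cardinal.{u}) (Y : Set X) : Prop :=
  ∀ y ∈ Y, #{x : X | ∃ y' ∈ Y, y < y' ∧ y < x ∧ x < y'} = l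

/-- `Y` is `l`-full on the left in `X`. -/
def FullLeft {X : Type u} [LinearOrder X] (l : Cardinal.{u}) (Y : Set X) : Prop :=
  ∀ y ∈ Y, #{x : X | ∃ y' ∈ Y, y' < y ∧ y' < x ∧ x < y} = l

/-- `Y` is completely `l`-full in `X`: every interval of `X` between two
elements of `Y` has cardinality `l`. -/
def CompletelyFull {X : Type u} [LinearOrder X] (l : Cardinal.{u}) (Y : Set X) : Prop :=
  ∀ y ∈ Y, ∀ y' ∈ Y, y < y' → #{x : X | y < x ∧ x < y'} = l

section Aux

variable {X : Type u} [LinearOrder X] (pick : Set X → X)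

/-- One splitting step: go left or right of the picked point. -/
def stepSet (Y : Set X) (b : Bool) : Set X :=
  if b then {z ∈ Y | pick Y < z} else {z ∈ Y | z < pick Y}

/-- Iterated splitting along a list of bits. -/
def nodeSet (R : Set X) : List Bool → Set X
  | [] => R
  | b :: σ => nodeSet (stepSet pick R b) σ

variable {l : Cardinal.{u}}
variable (hp : ∀ Y : Set X, #Y = l →
  pick Y ∈ Y ∧ #{z ∈ Y | z < pick Y} = l ∧ #{z ∈ Y | pick Y < z} = l)

include hp

theorem stepSet_card {Y : Set X} (hY : #Y = l) (b : Bool) : #(stepSet pick Y b) = l := by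
  cases b
  · simp only [stepSet, Bool.false_eq_true, if_false]
    exact (hp Y hY).2.1
  · simp only [stepSet, if_true]
    exact (hp Y hY).2.2

theorem nodeSet_card {R : Set X} (hR : #R = l) (σ : List Bool) :
    #(nodeSet pick R σ) = l := by
  induction σ generalizing R with
  | nil => exact hR
  | cons b σ ih => exact ih (stepSet_card pick hp hR b)

omit hp

theorem stepSet_subset (Y : Set X) (b : Bool) : stepSet pick Y b ⊆ Y := by
  cases b <;> intro z hz <;> exact hz.1

theorem nodeSet_subset (R : Set X) (σ : List Bool) : nodeSet pick R σ ⊆ R := by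
  induction σ generalizing R with
  | nil => exact subset_rfl
  | cons b σ ih => exact (ih _).trans (stepSet_subset pick R b)

theorem nodeSet_append (R : Set X) (σ τ : List Bool) :
    nodeSet pick R (σ ++ τ) = nodeSet pick (nodeSet pick R σ) τ := by
  induction σ generalizing R with
  | nil => rfl
  | cons b σ ih => simp [nodeSet, ih]

/-- The point chosen at a node. -/
def yk (R : Set X) (σ : List Bool) : X := pick (nodeSet pick R σ)

include hp

theorem yk_mem {R : Set X} (hR : #R = l) (σ : List Bool) :
    yk pick R σ ∈ nodeSet pick R σ :=
  (hp _ (nodeSet_card pick hp hR σ)).1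

theorem yk_lt_of_false {R : Set X} (hR : #R = l) (σ : List Bool) :
    yk pick R (false :: σ) < pick R := by
  have h := yk_mem pick hp (stepSet_card pick hp hR false) σ
  have := nodeSet_subset pick (stepSet pick R false) σ h
  exact this.2

theorem lt_yk_of_true {R : Set X} (hR : #R = l) (σ : List Bool) :
    pick R < yk pick R (true :: σ) := by
  have h := yk_mem pick hp (stepSet_card pick hp hR true) σ
  have := nodeSet_subset pick (stepSet pick R true) σ h
  exact this.2

/-- Key lemma: strictly between any two chosen points lies a full node. -/
theorem between (σ : List Bool) : ∀ (τ : List Bool) (R : Set X), #R = l →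
    yk pick R σ < yk pick R τ →
    ∃ ν : List Bool, nodeSet pick R ν ⊆ {x | yk pick R σ < x ∧ x < yk pick R τ} := by
  induction σ with
  | nil =>
    intro τ R hR hlt
    match τ with
    | [] => exact absurd hlt (lt_irrefl _)
    | false :: τ' => exact absurd hlt (not_lt_of_gt (yk_lt_of_false pick hp hR τ'))
    | true :: τ' =>
      refine ⟨true :: τ' ++ [false], fun x hx => ?_⟩
      have hx' : x ∈ nodeSet pick (nodeSet pick R (true :: τ')) [false] := by
        have : (true :: τ' ++ [false]) = (true :: τ') ++ [false] := rfl
        rw [this, nodeSet_append] at hx; exact hx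
      simp only [nodeSet, stepSet, if_neg Bool.false_ne_true] at hx'
      constructor
      · have hmem : x ∈ nodeSet pick R (true :: τ') := hx'.1
        have : x ∈ stepSet pick R true := nodeSet_subset pick _ τ' hmem
        exact this.2
      · exact hx'.2
  | cons a σ' ih =>
    intro τ R hR hlt
    match τ with
    | [] =>
      match a with
      | true => exact absurd hlt (not_lt_of_gt (lt_yk_of_true pick hp hR σ'))
      | false =>
        refine ⟨false :: σ' ++ [true], fun x hx => ?_⟩
        have hx' : x ∈ nodeSet pick (nodeSet pick R (false :: σ')) [true] := by
          have : (false :: σ' ++ [true]) = (false :: σ') ++ [true] := rfl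
          rw [this, nodeSet_append] at hx; exact hx
        simp only [nodeSet, stepSet, if_pos rfl] at hx'
        constructor
        · exact hx'.2
        · have hmem : x ∈ nodeSet pick R (false :: σ') := hx'.1
          have : x ∈ stepSet pick R false := nodeSet_subset pick _ σ' hmem
          exact this.2
    | b :: τ' =>
      match a, b with
      | true, true =>
        obtain ⟨ν, hν⟩ := ih τ' (stepSet pick R true)
          (stepSet_card pick hp hR true) hlt
        exact ⟨true :: ν, hν⟩
      | false, false =>
        obtain ⟨ν, hν⟩ := ih τ' (stepSet pick R false)
          (stepSet_card pick hp hR false) hlt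
        exact ⟨false :: ν, hν⟩
      | true, false =>
        have h1 := lt_yk_of_true pick hp hR σ'
        have h2 := yk_lt_of_false pick hp hR τ'
        exact absurd hlt (not_lt_of_gt (h2.trans h1))
      | false, true =>
        have h1 := yk_lt_of_false pick hp hR σ'
        refine ⟨true :: τ' ++ [false], fun x hx => ?_⟩
        have hx' : x ∈ nodeSet pick (nodeSet pick R (true :: τ')) [false] := by
          have : (true :: τ' ++ [false]) = (true :: τ') ++ [false] := rfl
          rw [this, nodeSet_append] at hx; exact hx
        simp only [nodeSet, stepSet, if_neg Bool.false_ne_true] at hx'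
        constructor
        · have hmem : x ∈ nodeSet pick R (true :: τ') := hx'.1
          have : x ∈ stepSet pick R true := nodeSet_subset pick _ τ' hmem
          exact h1.trans this.2
        · exact hx'.2

end Aux

/-- Corollary 2.4: under the splitting hypothesis, `X` contains completely
`l`-full subsets of every countable order type `α`. -/
theorem stmt2 (l : Cardinal.{u}) (hl : l.IsRegular) (X : Type u) [LinearOrder X]
    (hX : #X = l)
    (hsplit : ∀ Y : Set X, #Y = l →
      ∃ y ∈ Y, #{z ∈ Y | z < y} = l ∧ #{z ∈ Y | y < z} = l) :
    ∀ α : Ordinal.{u}, α.card ≤ Cardinal.aleph0 →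
      ∃ f : α.ToType → X, StrictMono f ∧ CompletelyFull l (Set.range f) := by
  classical
  intro α hα
  -- the choice function
  haveI hX_ne : Nonempty X := by
    rw [← Cardinal.mk_ne_zero_iff, hX]; exact hl.pos.ne'
  set pick : Set X → X := fun Y =>
    if h : #Y = l then (hsplit Y h).choose else Classical.arbitrary X with hpick_def
  have hp : ∀ Y : Set X, #Y = l →
      pick Y ∈ Y ∧ #{z ∈ Y | z < pick Y} = l ∧ #{z ∈ Y | pick Y < z} = l := by
    intro Y hY
    have := (hsplit Y hY).choose_spec
    simp only [hpick_def, dif_pos hY]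
    exact ⟨this.1, this.2⟩
  have huniv : #(univ : Set X) = l := by rw [Cardinal.mk_univ, hX]
  -- the countable dense completely full set
  set S : Set X := Set.range (fun σ : List Bool => yk pick univ σ) with hS_def
  have hS_count : S.Countable := Set.countable_range _
  have key : ∀ u ∈ S, ∀ v ∈ S, u < v →
      ∃ ν : List Bool, nodeSet pick univ ν ⊆ {x | u < x ∧ x < v} := by
    rintro u ⟨σ, rfl⟩ v ⟨τ, rfl⟩ huv
    exact between pick hp σ τ univ huniv huv
  have hfull : ∀ u ∈ S, ∀ v ∈ S, u < v → #{x : X | u < x ∧ x < v} = l := by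
    intro u hu v hv huv
    obtain ⟨ν, hν⟩ := key u hu v hv huv
    refine le_antisymm ?_ ?_
    · calc #{x : X | u < x ∧ x < v} ≤ #(univ : Set X) :=
          Cardinal.mk_le_mk_of_subset (subset_univ _)
        _ = l := huniv
    · calc l = #(nodeSet pick univ ν) := (nodeSet_card pick hp huniv ν).symm
        _ ≤ #{x : X | u < x ∧ x < v} := Cardinal.mk_le_mk_of_subset hν
  -- instances on S
  haveI : Countable ↥S := hS_count.to_subtype
  haveI : Nontrivial ↥S := by
    have h1 : yk pick univ [] ∈ S := ⟨[], rfl⟩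
    have h2 : yk pick univ [true] ∈ S := ⟨[true], rfl⟩
    have hlt : yk pick univ [] < yk pick univ [true] :=
      lt_yk_of_true pick hp huniv []
    exact ⟨⟨⟨_, h1⟩, ⟨_, h2⟩, fun h => absurd (congrArg Subtype.val h) (ne_of_lt hlt)⟩⟩
  haveI : DenselyOrdered ↥S := by
    constructor
    rintro ⟨u, hu⟩ ⟨v, hv⟩ huv
    obtain ⟨ν, hν⟩ := key u hu v hv huv
    have hmem : yk pick univ ν ∈ nodeSet pick univ ν := yk_mem pick hp huniv ν
    have h := hν hmem
    exact ⟨⟨yk pick univ ν, ⟨ν, rfl⟩⟩, h.1, h.2⟩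
  -- countability of the ordinal's type
  haveI : Countable α.ToType := by
    have h : #α.ToType ≤ Cardinal.aleph0 := by rw [Cardinal.mk_toType]; exact hα
    exact Cardinal.mk_le_aleph0_iff.mp h
  obtain ⟨e⟩ : Nonempty (α.ToType ↪o ↥S) := Order.embedding_from_countable_to_dense α.ToType ↥S
  refine ⟨fun i => (e i : X), ?_, ?_⟩
  · intro a b hab
    exact Subtype.coe_lt_coe.mpr (e.strictMono hab)
  · intro u hu v hv huv
    obtain ⟨i, rfl⟩ := hu
    obtain ⟨j, rfl⟩ := hv
    exact hfull _ (e i).2 _ (e j).2 huv
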